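/- Let K ∈ L¹_loc(ℝ₊, ℝ₊) be nonnegative, nonincreasing, and locally integrable, and let R ∈ L¹_loc(ℝ₊) be the resolvent of the second kind of K, i.e. the unique locally integrable function satisfying K ∗ R = R ∗ K = K − R, where ∗ denotes convolution on ℝ₊. Suppose additionally that R ≥ 0. Then ∫₀^∞ R(s) ds ≤ 1. -/

import Mathlib

open Filter Set MeasureTheory ENNReal

namespace Stmt6Aux

noncomputable def Rl (ρ : ℝ → ℝ≥0∞) (t : ℝ) : ℝ≥0∞ := ∫⁻ s in Ioc 0 t, ρ s
noncomputable def fl (κ ρ : ℝ → ℝ≥0∞) (t : ℝ) : ℝ≥0∞ := ∫⁻ s in Ioc 0 t, κ s * Rl ρ (t - s)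

lemma Rl_mono (ρ : ℝ → ℝ≥0∞) : Monotone (Rl ρ) := fun _ _ hab =>
  lintegral_mono_set (Ioc_subset_Ioc le_rfl hab)

lemma Rl_nonpos (ρ : ℝ → ℝ≥0∞) {t : ℝ} (ht : t ≤ 0) : Rl ρ t = 0 := by
  simp [Rl, Ioc_eq_empty (not_lt.mpr ht)]

lemma shift (h : ℝ → ℝ≥0∞) (hm : Measurable h) (Δ a b : ℝ) :
    ∫⁻ u in Ioc a b, h u = ∫⁻ u in Ioc (a - Δ) (b - Δ), h (u + Δ) := by
  have hpre : (fun x : ℝ => x + Δ) ⁻¹' Ioc a b = Ioc (a - Δ) (b - Δ) := by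
    ext x; simp only [mem_preimage, mem_Ioc]
    constructor <;> rintro ⟨h1, h2⟩ <;> constructor <;> linarith
  have := (measurePreserving_add_right volume Δ).setLIntegral_comp_preimage
      (measurableSet_Ioc (a := a) (b := b)) hm
  rw [← this, hpre]

lemma Rl_meas_comp (ρ : ℝ → ℝ≥0∞) (t : ℝ) : Measurable (fun s : ℝ => Rl ρ (t - s)) := by
  have : Antitone (fun s : ℝ => Rl ρ (t - s)) := fun a b hab =>
    Rl_mono ρ (by linarith : t - b ≤ t - a)
  exact this.measurable

lemma fl_integrand_meas (κ ρ : ℝ → ℝ≥0∞) (hκ : Measurable κ) (t : ℝ) :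
    Measurable (fun s : ℝ => κ s * Rl ρ (t - s)) :=
  hκ.mul (Rl_meas_comp ρ t)

lemma tonelli {ρ κ : ℝ → ℝ≥0∞} (hρ : Measurable ρ) (hκ : Measurable κ) {t : ℝ} (ht : 0 < t) :
    ∫⁻ u in Ioc 0 t, (∫⁻ s in Ioc 0 u, ρ (u - s) * κ s) = fl κ ρ t := by
  set g : ℝ → ℝ → ℝ≥0∞ := fun u s => if s ≤ u then ρ (u - s) * κ s else 0 with hg
  have hgm : Measurable (Function.uncurry g) := by
    apply Measurable.ite
    · exact measurableSet_le measurable_snd measurable_fst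
    · exact (hρ.comp (measurable_fst.sub measurable_snd)).mul (hκ.comp measurable_snd)
    · exact measurable_const
  have step1 : ∀ u ∈ Ioc 0 t,
      (∫⁻ s in Ioc 0 u, ρ (u - s) * κ s) = ∫⁻ s in Ioc 0 t, g u s := by
    intro u hu
    have hsplit : Ioc (0:ℝ) u ∪ Ioc u t = Ioc 0 t := Ioc_union_Ioc_eq_Ioc hu.1.le hu.2
    have hdisj : Disjoint (Ioc (0:ℝ) u) (Ioc u t) := (Ioc_disjoint_Ioc_of_le le_rfl)
    rw [← hsplit, lintegral_union measurableSet_Ioc hdisj]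
    have h1 : (∫⁻ s in Ioc 0 u, g u s) = ∫⁻ s in Ioc 0 u, ρ (u - s) * κ s := by
      apply setLIntegral_congr_fun measurableSet_Ioc
      exact fun s hs => by simp [hg, hs.2]
    have h2 : (∫⁻ s in Ioc u t, g u s) = 0 := by
      rw [← lintegral_zero (μ := volume.restrict (Ioc u t))]
      apply setLIntegral_congr_fun measurableSet_Ioc
      exact fun s hs => by simp [hg, not_le.mpr hs.1]
    rw [h1, h2, add_zero]
  have hcongr1 : (∫⁻ u in Ioc 0 t, (∫⁻ s in Ioc 0 u, ρ (u - s) * κ s))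
      = ∫⁻ u in Ioc 0 t, ∫⁻ s in Ioc 0 t, g u s :=
    setLIntegral_congr_fun measurableSet_Ioc step1
  rw [hcongr1]
  rw [lintegral_lintegral_swap (hgm.aemeasurable)]
  apply setLIntegral_congr_fun measurableSet_Ioc
  intro s hs
  beta_reduce
  have hsplit : Ioc (0:ℝ) s ∪ Ioc s t = Ioc 0 t := Ioc_union_Ioc_eq_Ioc hs.1.le hs.2
  have hdisj : Disjoint (Ioc (0:ℝ) s) (Ioc s t) := (Ioc_disjoint_Ioc_of_le le_rfl)
  rw [← hsplit, lintegral_union measurableSet_Ioc hdisj]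
  have h1 : (∫⁻ u in Ioc 0 s, g u s) = 0 := by
    rw [setLIntegral_congr ((Ioo_ae_eq_Ioc (a := (0:ℝ)) (b := s)).symm)]
    rw [← lintegral_zero (μ := volume.restrict (Ioo 0 s))]
    apply setLIntegral_congr_fun measurableSet_Ioo
    exact fun u hu => by simp [hg, not_le.mpr hu.2]
  have h2 : (∫⁻ u in Ioc s t, g u s) = κ s * Rl ρ (t - s) := by
    have e1 : (∫⁻ u in Ioc s t, g u s) = ∫⁻ u in Ioc s t, ρ (u - s) * κ s := by
      apply setLIntegral_congr_fun measurableSet_Ioc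
      exact fun u hu => by simp [hg, hu.1.le]
    rw [e1]
    have e2 := shift (fun u => ρ (u - s) * κ s)
      ((hρ.comp (measurable_id.sub measurable_const)).mul measurable_const) s s t
    simp only [sub_self] at e2
    rw [e2]
    have : ∀ v : ℝ, ρ (v + s - s) * κ s = ρ v * κ s := fun v => by rw [add_sub_cancel_right]
    simp_rw [this]
    rw [lintegral_mul_const _ hρ, Rl, mul_comm]
  rw [h1, h2, zero_add]


lemma main {ρ κ : ℝ → ℝ≥0∞} (hρ : Measurable ρ) (hκ : Measurable κ)
    (hanti : ∀ ⦃u v : ℝ⦄, 0 < u → u ≤ v → κ v ≤ κ u)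
    (hKfin : ∀ t : ℝ, 0 < t → (∫⁻ s in Ioc 0 t, κ s) ≠ ∞)
    (hkey : ∀ t : ℝ, 0 < t → (∫⁻ s in Ioc 0 t, κ s) = Rl ρ t + fl κ ρ t)
    {t₁ : ℝ} (ht₁ : 0 < t₁) : Rl ρ t₁ ≤ 1 := by
  by_contra hgt
  push_neg at hgt
  have hRfin : Rl ρ t₁ ≠ ∞ := by
    intro h
    exact hKfin t₁ ht₁ (by rw [hkey t₁ ht₁, h, top_add])
  have hflfin : fl κ ρ t₁ ≠ ∞ := by
    intro h
    exact hKfin t₁ ht₁ (by rw [hkey t₁ ht₁, h, add_top])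
  set ν : Measure ℝ := volume.withDensity ρ with hν
  have hRlν : ∀ t : ℝ, Rl ρ t = ν (Ioc 0 t) := fun t =>
    (withDensity_apply ρ measurableSet_Ioc).symm
  set S : Set ℝ := {t | t ∈ Icc 0 t₁ ∧ Rl ρ t ≤ 1} with hS
  have h0S : (0:ℝ) ∈ S := ⟨⟨le_rfl, ht₁.le⟩, by rw [Rl_nonpos ρ le_rfl]; exact zero_le_one⟩
  have hbdd : BddAbove S := ⟨t₁, fun x hx => hx.1.2⟩
  have ht₀0 : 0 ≤ sSup S := le_csSup hbdd h0S
  set t₀ : ℝ := sSup S with ht₀def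
  have ht₀t₁ : t₀ ≤ t₁ := csSup_le ⟨0, h0S⟩ fun x hx => hx.1.2
  have hgt' : ∀ t : ℝ, t₀ < t → t ≤ t₁ → 1 < Rl ρ t := by
    intro t hlt hle
    by_contra hc
    push_neg at hc
    exact absurd (le_csSup hbdd ⟨⟨ht₀0.trans hlt.le, hle⟩, hc⟩) (not_le.mpr hlt)
  have hle : Rl ρ t₀ ≤ 1 := by
    rcases eq_or_lt_of_le ht₀0 with h | h
    · rw [Rl_nonpos ρ h.symm.le]; exact zero_le_one
    · set u : ℕ → ℝ := fun n => t₀ - t₀ / (n + 1) with hu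
      have humono : Monotone u := by
        intro m n hmn
        have h1 : (m:ℝ) + 1 ≤ (n:ℝ) + 1 := by exact_mod_cast by omega
        have h2 := div_le_div_of_nonneg_left h.le (by positivity : (0:ℝ) < (m:ℝ)+1) h1
        simp only [hu]
        linarith
      have hUnion : (⋃ n, Ioc (0:ℝ) (u n)) = Ioo 0 t₀ := by
        ext x
        simp only [mem_iUnion, mem_Ioc, mem_Ioo]
        constructor
        · rintro ⟨n, hx1, hx2⟩
          refine ⟨hx1, lt_of_le_of_lt hx2 ?_⟩
          simp only [hu]
          have : 0 < t₀ / ((n:ℝ) + 1) := by positivity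
          linarith
        · rintro ⟨hx1, hx2⟩
          obtain ⟨n, hn⟩ := exists_nat_gt (t₀ / (t₀ - x))
          refine ⟨n, hx1, ?_⟩
          have hpos : (0:ℝ) < t₀ - x := by linarith
          have hn1 : t₀ / (t₀ - x) ≤ (n:ℝ) + 1 := by linarith
          have h3 : t₀ ≤ (t₀ - x) * ((n:ℝ) + 1) := by
            rw [div_le_iff₀ hpos] at hn1; linarith
          have hd : t₀ / ((n:ℝ)+1) ≤ t₀ - x := by
            rw [div_le_iff₀ (by positivity : (0:ℝ) < (n:ℝ)+1)]; linarith
          simp only [hu]; linarith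
      have hsing : ν {t₀} = 0 := by
        rw [hν, withDensity_apply ρ (measurableSet_singleton _),
          Measure.restrict_eq_zero.mpr (measure_singleton _)]
        simp
      have hIoo : ν (Ioo 0 t₀) = ν (Ioc 0 t₀) := by
        have h1 : ν (Ioc 0 t₀) ≤ ν (Ioo 0 t₀) + ν {t₀} := by
          refine le_trans (measure_mono ?_) (measure_union_le _ _)
          intro x hx
          rcases lt_or_eq_of_le hx.2 with h' | h'
          · exact Or.inl ⟨hx.1, h'⟩
          · exact Or.inr h'
        refine le_antisymm (measure_mono Ioo_subset_Ioc_self) ?_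
        rw [hsing, add_zero] at h1; exact h1
      have hsup : ν (Ioo 0 t₀) = ⨆ n, ν (Ioc 0 (u n)) := by
        rw [← hUnion]
        exact Monotone.measure_iUnion fun m n hmn => Ioc_subset_Ioc le_rfl (humono hmn)
      rw [hRlν, ← hIoo, hsup]
      refine iSup_le fun n => ?_
      have hun : u n < t₀ := by
        simp only [hu]
        have : 0 < t₀ / ((n:ℝ) + 1) := by positivity
        linarith
      obtain ⟨s, hsS, hs⟩ := exists_lt_of_lt_csSup ⟨0, h0S⟩ hun
      rw [← hRlν]
      exact le_trans (Rl_mono ρ hs.le) hsS.2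
  have ht₀lt : t₀ < t₁ :=
    lt_of_le_of_ne ht₀t₁ fun h => absurd hle (by rw [h]; exact not_le.mpr hgt)
  have hge : 1 ≤ Rl ρ t₀ := by
    set v : ℕ → ℝ := fun n => t₀ + (t₁ - t₀) / (n + 1) with hv
    have hvanti : Antitone fun n => Ioc (0:ℝ) (v n) := by
      intro m n hmn
      apply Ioc_subset_Ioc le_rfl
      simp only [hv]
      have h1 : (m:ℝ) + 1 ≤ (n:ℝ) + 1 := by exact_mod_cast by omega
      have h2 := div_le_div_of_nonneg_left (by linarith : (0:ℝ) ≤ t₁ - t₀)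
        (by positivity : (0:ℝ) < (m:ℝ)+1) h1
      linarith
    have hInter : (⋂ n, Ioc (0:ℝ) (v n)) = Ioc 0 t₀ := by
      ext x
      simp only [mem_iInter, mem_Ioc]
      constructor
      · intro hx
        refine ⟨(hx 0).1, ?_⟩
        by_contra hc
        push_neg at hc
        obtain ⟨n, hn⟩ := exists_nat_gt ((t₁ - t₀) / (x - t₀))
        have hpos : (0:ℝ) < x - t₀ := by linarith
        have h2 : t₁ - t₀ < (x - t₀) * (n:ℝ) := by
          rw [div_lt_iff₀ hpos] at hn; linarith
        have hd : (t₁ - t₀) / ((n:ℝ)+1) < x - t₀ := by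
          rw [div_lt_iff₀ (by positivity : (0:ℝ) < (n:ℝ)+1)]
          nlinarith
        have h4 := (hx n).2
        simp only [hv] at h4
        linarith
      · rintro ⟨hx1, hx2⟩ n
        refine ⟨hx1, hx2.trans ?_⟩
        simp only [hv]
        have : 0 ≤ (t₁ - t₀) / ((n:ℝ) + 1) := div_nonneg (by linarith) (by positivity)
        linarith
    have hinf : ν (Ioc 0 t₀) = ⨅ n, ν (Ioc 0 (v n)) := by
      rw [← hInter]
      refine Antitone.measure_iInter hvanti (fun n => measurableSet_Ioc.nullMeasurableSet) ?_
      refine ⟨0, ?_⟩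
      have hv0 : v 0 ≤ t₁ := by simp [hv]
      refine ne_top_of_le_ne_top (by rw [hRlν t₁] at hRfin; exact hRfin) ?_
      exact measure_mono (Ioc_subset_Ioc le_rfl hv0)
    rw [hRlν, hinf]
    refine le_iInf fun n => ?_
    have hv1 : t₀ < v n := by
      simp only [hv]
      have : 0 < (t₁ - t₀) / ((n:ℝ) + 1) := div_pos (by linarith) (by positivity)
      linarith
    have hv2 : v n ≤ t₁ := by
      simp only [hv]
      have h1 : (1:ℝ) ≤ (n:ℝ) + 1 := by exact_mod_cast by omega
      have h2 := div_le_self (by linarith : (0:ℝ) ≤ t₁ - t₀) h1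
      linarith
    rw [← hRlν]
    exact (hgt' (v n) hv1 hv2).le
  have hR0 : Rl ρ t₀ = 1 := le_antisymm hle hge
  have ht₀pos : 0 < t₀ := by
    rcases eq_or_lt_of_le ht₀0 with h | h
    · exfalso; rw [Rl_nonpos ρ h.symm.le] at hR0; simp at hR0
    · exact h
  clear hle hge hgt' hRlν hν
  -- quantitative estimate
  obtain ⟨Δ, hΔ⟩ : ∃ Δ : ℝ, Δ = t₁ - t₀ := ⟨t₁ - t₀, rfl⟩
  have hΔpos : 0 < Δ := by rw [hΔ]; linarith
  have hΔt₁ : Δ ≤ t₁ := by rw [hΔ]; linarith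
  have ht₁Δ : t₁ - Δ = t₀ := by rw [hΔ]; ring
  have hκΔ : Measurable fun u : ℝ => κ (u + Δ) := hκ.comp (measurable_add_const Δ)
  have hsplit1 : (∫⁻ s in Ioc 0 t₀, κ s) + (∫⁻ s in Ioc t₀ t₁, κ s)
      = ∫⁻ s in Ioc 0 t₁, κ s := by
    rw [← lintegral_union measurableSet_Ioc (Ioc_disjoint_Ioc_of_le le_rfl),
      Ioc_union_Ioc_eq_Ioc ht₀0 ht₀t₁]
  have hsplit2 : (∫⁻ s in Ioc 0 Δ, κ s) + (∫⁻ s in Ioc Δ t₁, κ s)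
      = ∫⁻ s in Ioc 0 t₁, κ s := by
    rw [← lintegral_union measurableSet_Ioc (Ioc_disjoint_Ioc_of_le le_rfl),
      Ioc_union_Ioc_eq_Ioc hΔpos.le hΔt₁]
  have htrans : (∫⁻ u in Ioc 0 t₀, κ (u + Δ)) = ∫⁻ s in Ioc Δ t₁, κ s := by
    rw [shift κ hκ Δ Δ t₁, sub_self, ht₁Δ]
  have hC_le : (∫⁻ s in Ioc Δ t₁, κ s) ≤ ∫⁻ s in Ioc 0 t₀, κ s := by
    rw [← htrans]
    exact setLIntegral_mono hκ fun u hu => hanti hu.1 (by linarith)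
  have hCfin : (∫⁻ s in Ioc Δ t₁, κ s) ≠ ∞ := ne_top_of_le_ne_top (hKfin t₀ ht₀pos) hC_le
  have hmulΔ : Measurable fun u : ℝ => κ (u + Δ) * Rl ρ (t₀ - u) :=
    hκΔ.mul (Rl_meas_comp ρ t₀)
  have hB' : (∫⁻ u in Ioc 0 t₀, κ (u + Δ) * Rl ρ (t₀ - u))
      = ∫⁻ s in Ioc Δ t₁, κ s * Rl ρ (t₁ - s) := by
    rw [shift (fun s => κ s * Rl ρ (t₁ - s)) (hκ.mul (Rl_meas_comp ρ t₁)) Δ Δ t₁,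
      sub_self, ht₁Δ]
    refine setLIntegral_congr_fun measurableSet_Ioc (fun u hu => ?_)
    have h5 : t₁ - (u + Δ) = t₀ - u := by rw [hΔ]; ring
    rw [h5]
  have hE : (∫⁻ u in Ioc 0 t₀, (κ u - κ (u + Δ)))
      = (∫⁻ s in Ioc 0 t₀, κ s) - (∫⁻ s in Ioc Δ t₁, κ s) := by
    rw [lintegral_sub hκΔ (by rw [htrans]; exact hCfin)
      ((ae_restrict_iff' measurableSet_Ioc).2
        (ae_of_all _ fun u hu => hanti hu.1 (by linarith)))]
    rw [htrans]
  have hflt₀ : fl κ ρ t₀ ≤ (∫⁻ u in Ioc 0 t₀, κ (u + Δ) * Rl ρ (t₀ - u))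
      + (∫⁻ u in Ioc 0 t₀, (κ u - κ (u + Δ))) := by
    rw [← lintegral_add_left hmulΔ]
    rw [fl]
    refine setLIntegral_mono (hmulΔ.add (hκ.sub hκΔ)) fun w hw => ?_
    have hr1 : Rl ρ (t₀ - w) ≤ 1 := by
      rw [← hR0]; exact Rl_mono ρ (by have := hw.1; linarith)
    calc κ w * Rl ρ (t₀ - w) ≤ (κ (w + Δ) + (κ w - κ (w + Δ))) * Rl ρ (t₀ - w) := by
          apply mul_le_mul_left
          exact le_add_tsub
      _ = κ (w + Δ) * Rl ρ (t₀ - w) + (κ w - κ (w + Δ)) * Rl ρ (t₀ - w) := by rw [add_mul]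
      _ ≤ κ (w + Δ) * Rl ρ (t₀ - w) + (κ w - κ (w + Δ)) := by
          exact add_le_add le_rfl (mul_le_of_le_one_right' hr1)
  have hED : (∫⁻ u in Ioc 0 t₀, (κ u - κ (u + Δ))) + (∫⁻ s in Ioc t₀ t₁, κ s)
      = ∫⁻ s in Ioc 0 Δ, κ s := by
    rw [hE]
    refine (ENNReal.add_left_inj hCfin).mp ?_
    calc ((∫⁻ s in Ioc 0 t₀, κ s) - (∫⁻ s in Ioc Δ t₁, κ s) + (∫⁻ s in Ioc t₀ t₁, κ s))
          + (∫⁻ s in Ioc Δ t₁, κ s)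
        = ((∫⁻ s in Ioc 0 t₀, κ s) - (∫⁻ s in Ioc Δ t₁, κ s) + (∫⁻ s in Ioc Δ t₁, κ s))
          + (∫⁻ s in Ioc t₀ t₁, κ s) := by ring
      _ = (∫⁻ s in Ioc 0 t₀, κ s) + (∫⁻ s in Ioc t₀ t₁, κ s) := by
          rw [tsub_add_cancel_of_le hC_le]
      _ = ∫⁻ s in Ioc 0 t₁, κ s := hsplit1
      _ = (∫⁻ s in Ioc 0 Δ, κ s) + (∫⁻ s in Ioc Δ t₁, κ s) := hsplit2.symm
  have hA : (∫⁻ s in Ioc 0 Δ, κ s) ≤ ∫⁻ s in Ioc 0 Δ, κ s * Rl ρ (t₁ - s) := by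
    refine setLIntegral_mono (hκ.mul (Rl_meas_comp ρ t₁)) fun s hs => ?_
    have h6 : 1 ≤ Rl ρ (t₁ - s) := by
      rw [← hR0]
      refine Rl_mono ρ ?_
      have h7 := hs.2
      rw [hΔ] at h7
      linarith
    calc κ s = κ s * 1 := (mul_one _).symm
      _ ≤ κ s * Rl ρ (t₁ - s) := mul_le_mul_right h6 _
  have hfl_split : fl κ ρ t₁ = (∫⁻ s in Ioc 0 Δ, κ s * Rl ρ (t₁ - s))
      + (∫⁻ s in Ioc Δ t₁, κ s * Rl ρ (t₁ - s)) := by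
    rw [fl, ← lintegral_union measurableSet_Ioc (Ioc_disjoint_Ioc_of_le le_rfl),
      Ioc_union_Ioc_eq_Ioc hΔpos.le hΔt₁]
  have hchain : fl κ ρ t₀ + (∫⁻ s in Ioc t₀ t₁, κ s) ≤ fl κ ρ t₁ := by
    calc fl κ ρ t₀ + (∫⁻ s in Ioc t₀ t₁, κ s)
        ≤ ((∫⁻ u in Ioc 0 t₀, κ (u + Δ) * Rl ρ (t₀ - u))
          + (∫⁻ u in Ioc 0 t₀, (κ u - κ (u + Δ)))) + (∫⁻ s in Ioc t₀ t₁, κ s) :=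
          add_le_add hflt₀ le_rfl
      _ = (∫⁻ u in Ioc 0 t₀, κ (u + Δ) * Rl ρ (t₀ - u))
          + ((∫⁻ u in Ioc 0 t₀, (κ u - κ (u + Δ))) + (∫⁻ s in Ioc t₀ t₁, κ s)) := by ring
      _ = (∫⁻ u in Ioc 0 t₀, κ (u + Δ) * Rl ρ (t₀ - u)) + (∫⁻ s in Ioc 0 Δ, κ s) := by
          rw [hED]
      _ ≤ (∫⁻ u in Ioc 0 t₀, κ (u + Δ) * Rl ρ (t₀ - u))
          + (∫⁻ s in Ioc 0 Δ, κ s * Rl ρ (t₁ - s)) := add_le_add le_rfl hA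
      _ = (∫⁻ s in Ioc 0 Δ, κ s * Rl ρ (t₁ - s)) + (∫⁻ s in Ioc Δ t₁, κ s * Rl ρ (t₁ - s)) := by
          rw [hB']; ring
      _ = fl κ ρ t₁ := hfl_split.symm
  have hfinal : Rl ρ t₁ + fl κ ρ t₁ ≤ 1 + fl κ ρ t₁ := by
    calc Rl ρ t₁ + fl κ ρ t₁ = ∫⁻ s in Ioc 0 t₁, κ s := (hkey t₁ ht₁).symm
      _ = (∫⁻ s in Ioc 0 t₀, κ s) + (∫⁻ s in Ioc t₀ t₁, κ s) := hsplit1.symm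
      _ = (Rl ρ t₀ + fl κ ρ t₀) + (∫⁻ s in Ioc t₀ t₁, κ s) := by rw [hkey t₀ ht₀pos]
      _ = Rl ρ t₀ + (fl κ ρ t₀ + (∫⁻ s in Ioc t₀ t₁, κ s)) := by ring
      _ ≤ 1 + fl κ ρ t₁ := by rw [hR0]; exact add_le_add le_rfl hchain
  exact absurd ((ENNReal.add_le_add_iff_right hflfin).mp hfinal) (not_le.mpr hgt)


noncomputable def Ic (ρ κ : ℝ → ℝ≥0∞) (u : ℝ) : ℝ≥0∞ := ∫⁻ s in Ioc 0 u, ρ (u - s) * κ s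

lemma Ic_meas {ρ κ : ℝ → ℝ≥0∞} (hρ : Measurable ρ) (hκ : Measurable κ) :
    Measurable (Ic ρ κ) := by
  have hF : Measurable (fun p : ℝ × ℝ => if 0 < p.2 ∧ p.2 ≤ p.1 then ρ (p.1 - p.2) * κ p.2 else 0) := by
    apply Measurable.ite
    · exact (measurableSet_lt measurable_const measurable_snd).inter
        (measurableSet_le measurable_snd measurable_fst)
    · exact (hρ.comp (measurable_fst.sub measurable_snd)).mul (hκ.comp measurable_snd)
    · exact measurable_const
  have heq : ∀ u : ℝ, Ic ρ κ u
      = ∫⁻ s, (if 0 < s ∧ s ≤ u then ρ (u - s) * κ s else 0) := by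
    intro u
    rw [Ic, ← lintegral_indicator measurableSet_Ioc]
    congr 1
    ext s
    by_cases hs : s ∈ Ioc 0 u
    · rw [indicator_of_mem hs, if_pos (mem_Ioc.mp hs)]
    · rw [indicator_of_notMem hs, if_neg fun h => hs (mem_Ioc.mpr h)]
  have h2 : Ic ρ κ = fun u => ∫⁻ s, (if 0 < s ∧ s ≤ u then ρ (u - s) * κ s else 0) :=
    funext heq
  rw [h2]
  exact Measurable.lintegral_prod_right hF

lemma fl_lt_top {ρ κ : ℝ → ℝ≥0∞} (hρ : Measurable ρ) (hκ : Measurable κ) {t : ℝ}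
    (hK : (∫⁻ s in Ioc 0 t, κ s) ≠ ∞) (hR : Rl ρ t ≠ ∞) : fl κ ρ t < ∞ := by
  have h1 : fl κ ρ t ≤ (∫⁻ s in Ioc 0 t, κ s) * Rl ρ t := by
    rw [← lintegral_mul_const _ hκ, fl]
    refine setLIntegral_mono (hκ.mul measurable_const) fun s hs => ?_
    exact mul_le_mul_right (Rl_mono ρ (by linarith [hs.1])) _
  exact lt_of_le_of_lt h1 (ENNReal.mul_lt_top hK.lt_top hR.lt_top)

end Stmt6Aux

open Stmt6Aux in
theorem stmt6
    (K R : ℝ → ℝ)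
    (hK_nonneg : ∀ t > (0:ℝ), 0 ≤ K t)
    (hK_anti : AntitoneOn K (Ioi 0))
    (hK_loc : ∀ t > (0:ℝ), IntegrableOn K (Ioc 0 t))
    (hR_loc : ∀ t > (0:ℝ), IntegrableOn R (Ioc 0 t))
    (hR_nonneg : ∀ t > (0:ℝ), 0 ≤ R t)
    (hres : ∀ᵐ t ∂(volume.restrict (Ioi (0:ℝ))),
      (∫ s in (0:ℝ)..t, K (t - s) * R s) = K t - R t ∧
      (∫ s in (0:ℝ)..t, R (t - s) * K s) = K t - R t) :
    ∫⁻ s in Ioi (0:ℝ), ENNReal.ofReal (R s) ≤ 1 := by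
  classical
  -- decomposition of Ioi 0
  have hIoi : Ioi (0:ℝ) = ⋃ n : ℕ, Ioc (0:ℝ) ((n:ℝ)+1) := by
    ext x
    simp only [mem_Ioi, mem_iUnion, mem_Ioc]
    constructor
    · intro hx
      obtain ⟨n, hn⟩ := exists_nat_ge x
      exact ⟨n, hx, by linarith⟩
    · rintro ⟨n, h1, _⟩; exact h1
  -- measurable representative ρ of ofReal ∘ R
  have hRae : AEMeasurable (fun s => ENNReal.ofReal (R s)) (volume.restrict (Ioi (0:ℝ))) := by
    rw [hIoi, aemeasurable_iUnion_iff]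
    intro n
    exact ((hR_loc ((n:ℝ)+1) (by positivity)).1.aemeasurable).ennreal_ofReal
  set ρ : ℝ → ℝ≥0∞ := hRae.mk _ with hρdef
  have hρm : Measurable ρ := hRae.measurable_mk
  have hρeq : (fun s => ENNReal.ofReal (R s)) =ᵐ[volume.restrict (Ioi (0:ℝ))] ρ := hRae.ae_eq_mk
  -- antitone representative κ of ofReal ∘ K
  set κ : ℝ → ℝ≥0∞ := fun s => if 0 < s then ENNReal.ofReal (K s) else ∞ with hκdef
  have hκanti : Antitone κ := by
    intro a b hab
    simp only [hκdef]
    by_cases ha : 0 < a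
    · rw [if_pos ha, if_pos (lt_of_lt_of_le ha hab)]
      exact ENNReal.ofReal_le_ofReal (hK_anti ha (lt_of_lt_of_le ha hab) hab)
    · rw [if_neg ha]; exact le_top
  have hκm : Measurable κ := hκanti.measurable
  have hκeq : ∀ s : ℝ, 0 < s → κ s = ENNReal.ofReal (K s) := fun s hs => if_pos hs
  have hanti : ∀ ⦃u v : ℝ⦄, 0 < u → u ≤ v → κ v ≤ κ u := fun u v _ huv => hκanti huv
  -- finiteness of Kl and Rl
  have hKlcongr : ∀ t : ℝ, 0 < t →
      (∫⁻ s in Ioc 0 t, κ s) = ∫⁻ s in Ioc 0 t, ENNReal.ofReal (K s) := fun t _ =>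
    setLIntegral_congr_fun measurableSet_Ioc (fun s hs => hκeq s hs.1)
  have hKfin : ∀ t : ℝ, 0 < t → (∫⁻ s in Ioc 0 t, κ s) ≠ ∞ := by
    intro t ht
    rw [hKlcongr t ht]
    exact (hK_loc t ht).setLIntegral_lt_top.ne
  have hρres : ∀ t : ℝ, 0 < t →
      (fun s => ENNReal.ofReal (R s)) =ᵐ[volume.restrict (Ioc (0:ℝ) t)] ρ := fun t _ =>
    ae_restrict_of_ae_restrict_of_subset Ioc_subset_Ioi_self hρeq
  have hRlcongr : ∀ t : ℝ, 0 < t →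
      Rl ρ t = ∫⁻ s in Ioc 0 t, ENNReal.ofReal (R s) := fun t ht =>
    (lintegral_congr_ae (hρres t ht)).symm
  have hRfin : ∀ t : ℝ, 0 < t → Rl ρ t ≠ ∞ := by
    intro t ht
    rw [hRlcongr t ht]
    exact (hR_loc t ht).setLIntegral_lt_top.ne
  -- the exceptional null set for ρ
  have hnull : volume ({v : ℝ | ¬ ENNReal.ofReal (R v) = ρ v} ∩ Ioi 0) = 0 := by
    have h1 := ae_iff.mp hρeq
    rwa [Measure.restrict_apply' measurableSet_Ioi] at h1
  obtain ⟨N, hNsub, hNm, hN0⟩ := exists_measurable_superset_of_null hnull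
  -- a.e. finiteness of Ic
  have hIcfin : ∀ᵐ u ∂(volume.restrict (Ioi (0:ℝ))), Ic ρ κ u < ∞ := by
    rw [hIoi, ae_restrict_iUnion_iff]
    intro n
    have htn : (0:ℝ) < (n:ℝ)+1 := by positivity
    have h1 : (∫⁻ u in Ioc 0 ((n:ℝ)+1), Ic ρ κ u) = fl κ ρ ((n:ℝ)+1) := tonelli hρm hκm htn
    have h2 : (∫⁻ u in Ioc 0 ((n:ℝ)+1), Ic ρ κ u) ≠ ∞ := by
      rw [h1]
      exact (fl_lt_top hρm hκm (hKfin _ htn) (hRfin _ htn)).ne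
    exact ae_lt_top (Ic_meas hρm hκm) h2
  -- the key pointwise a.e. identity
  have hkey_ae : ∀ᵐ u ∂(volume.restrict (Ioi (0:ℝ))), κ u = ρ u + Ic ρ κ u := by
    filter_upwards [hres, hIcfin, hρeq, ae_restrict_mem measurableSet_Ioi]
      with u hres_u hIc_u hρ_u hu
    -- a.e. identification of the integrand on (0, u]
    have hsae : ∀ᵐ s ∂(volume.restrict (Ioc (0:ℝ) u)),
        ENNReal.ofReal (R (u - s) * K s) = ρ (u - s) * κ s ∧ 0 ≤ R (u - s) ∧ 0 ≤ K s := by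
      have hpre : volume ((fun s : ℝ => u - s) ⁻¹' N) = 0 := by
        rw [(Measure.measurePreserving_sub_left volume u).measure_preimage hNm.nullMeasurableSet]
        exact hN0
      have hpre' : (volume.restrict (Ioc (0:ℝ) u)) ((fun s : ℝ => u - s) ⁻¹' N) = 0 := by
        rw [Measure.restrict_apply' measurableSet_Ioc]
        exact measure_mono_null inter_subset_left hpre
      have h1 : ∀ᵐ s ∂(volume.restrict (Ioc (0:ℝ) u)), (u - s) ∉ N :=
        ae_iff.2 (measure_mono_null (fun s hs => not_not.mp hs) hpre')
      have hsng : (volume.restrict (Ioc (0:ℝ) u)) {u} = 0 := by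
        rw [Measure.restrict_apply' measurableSet_Ioc]
        exact measure_mono_null inter_subset_left (measure_singleton u)
      have h2 : ∀ᵐ s ∂(volume.restrict (Ioc (0:ℝ) u)), s ≠ u :=
        ae_iff.2 (measure_mono_null (fun s hs => not_not.mp hs) hsng)
      filter_upwards [h1, h2, ae_restrict_mem measurableSet_Ioc] with s hsN hsu hs
      have hspos : 0 < s := hs.1
      have husp : 0 < u - s := lt_of_le_of_ne (by linarith [hs.2]) (by intro h; exact hsu (by linarith))
      have hρs : ENNReal.ofReal (R (u - s)) = ρ (u - s) := by
        by_contra hc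
        exact hsN (hNsub ⟨hc, husp⟩)
      have hRn : 0 ≤ R (u - s) := hR_nonneg _ husp
      have hKn : 0 ≤ K s := hK_nonneg _ hspos
      refine ⟨?_, hRn, hKn⟩
      rw [ENNReal.ofReal_mul hRn, hρs, hκeq s hspos]
    -- integrability of the convolution integrand
    have hIc_int : (∫⁻ s in Ioc (0:ℝ) u, ENNReal.ofReal (R (u - s) * K s)) = Ic ρ κ u := by
      refine lintegral_congr_ae ?_
      filter_upwards [hsae] with s hs
      exact hs.1
    have h_nonneg : 0 ≤ᵐ[volume.restrict (Ioc (0:ℝ) u)] fun s => R (u - s) * K s := by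
      filter_upwards [hsae] with s hs
      exact mul_nonneg hs.2.1 hs.2.2
    have h_meas : AEStronglyMeasurable (fun s => R (u - s) * K s)
        (volume.restrict (Ioc (0:ℝ) u)) := by
      have hg : Measurable fun s : ℝ => (ρ (u - s) * κ s).toReal :=
        ((hρm.comp (measurable_const.sub measurable_id)).mul hκm).ennreal_toReal
      refine hg.aestronglyMeasurable.congr ?_
      filter_upwards [hsae] with s hs
      rw [← hs.1, ENNReal.toReal_ofReal (mul_nonneg hs.2.1 hs.2.2)]
    have h_int : IntegrableOn (fun s => R (u - s) * K s) (Ioc 0 u) := by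
      refine ⟨h_meas, ?_⟩
      rw [hasFiniteIntegral_iff_ofReal h_nonneg, hIc_int]
      exact hIc_u
    have h_ofReal : ENNReal.ofReal (∫ s in Ioc (0:ℝ) u, R (u - s) * K s) = Ic ρ κ u := by
      rw [ofReal_integral_eq_lintegral_ofReal h_int h_nonneg, hIc_int]
    have h_conv_nonneg : 0 ≤ ∫ s in Ioc (0:ℝ) u, R (u - s) * K s :=
      integral_nonneg_of_ae h_nonneg
    have h_interval : (∫ s in (0:ℝ)..u, R (u - s) * K s)
        = ∫ s in Ioc (0:ℝ) u, R (u - s) * K s :=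
      intervalIntegral.integral_of_le (le_of_lt hu)
    have h_eqn : K u - R u = ∫ s in Ioc (0:ℝ) u, R (u - s) * K s := by
      rw [← h_interval]; exact hres_u.2.symm
    have hKu : K u = R u + ∫ s in Ioc (0:ℝ) u, R (u - s) * K s := by linarith
    rw [hκeq u hu, hKu, ENNReal.ofReal_add (hR_nonneg u hu) h_conv_nonneg, hρ_u, h_ofReal]
  -- the integrated identity
  have hkey : ∀ t : ℝ, 0 < t → (∫⁻ s in Ioc 0 t, κ s) = Rl ρ t + fl κ ρ t := by
    intro t ht
    have h1 : (∫⁻ s in Ioc 0 t, κ s) = ∫⁻ s in Ioc 0 t, (ρ s + Ic ρ κ s) := by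
      refine lintegral_congr_ae ?_
      exact ae_restrict_of_ae_restrict_of_subset Ioc_subset_Ioi_self hkey_ae
    have h2 : (∫⁻ u in Ioc 0 t, Ic ρ κ u) = fl κ ρ t := tonelli hρm hκm ht
    rw [h1, lintegral_add_left hρm, h2]
    rfl
  -- conclusion
  have hmain : ∀ t : ℝ, 0 < t → Rl ρ t ≤ 1 := fun t ht =>
    main hρm hκm hanti hKfin hkey ht
  calc (∫⁻ s in Ioi (0:ℝ), ENNReal.ofReal (R s)) = ∫⁻ s in Ioi (0:ℝ), ρ s :=
      lintegral_congr_ae hρeq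
    _ = (volume.withDensity ρ) (Ioi 0) := (withDensity_apply ρ measurableSet_Ioi).symm
    _ = ⨆ n : ℕ, (volume.withDensity ρ) (Ioc 0 ((n:ℝ)+1)) := by
        rw [hIoi]
        refine Monotone.measure_iUnion fun m n hmn => Ioc_subset_Ioc le_rfl ?_
        have : (m:ℝ) ≤ (n:ℝ) := by exact_mod_cast hmn
        linarith
    _ ≤ 1 := by
        refine iSup_le fun n => ?_
        have h1 : (volume.withDensity ρ) (Ioc 0 ((n:ℝ)+1)) = Rl ρ ((n:ℝ)+1) :=
          withDensity_apply ρ measurableSet_Ioc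
        rw [h1]
        exact hmain _ (by positivity)
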